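/- Let y be a complex number with 0 < |y| < 1. Then z := y/(1 + √(1 − |y|²)) satisfies |z| < 1 and ρ(0,z) = ρ(z,y) = ρ(0,y)/2; that is, z is the hyperbolic midpoint of the hyperbolic segment from 0 to y. -/

import Mathlib

open Complex

/-- The hyperbolic distance in the unit disk. -/
noncomputable def hypDist (x y : ℂ) : ℝ :=
  2 * Real.arsinh (‖x - y‖ /
    Real.sqrt ((1 - ‖x‖ ^ 2) * (1 - ‖y‖ ^ 2)))

/-- For `0 < |y| < 1`, the point `z = y/(1 + √(1 − |y|²))` is the hyperbolic
midpoint of the hyperbolic segment from `0` to `y`. -/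
theorem hyperbolic_midpoint_from_origin (y : ℂ)
    (hy0 : 0 < ‖y‖) (hy : ‖y‖ < 1) :
    let z := y / (((1 + Real.sqrt (1 - ‖y‖ ^ 2) : ℝ)) : ℂ)
    ‖z‖ < 1 ∧ hypDist 0 z = hypDist z y ∧ hypDist 0 z = hypDist 0 y / 2 := by
  intro z
  set r := ‖y‖ with hr
  have hr2 : 0 < 1 - r ^ 2 := by nlinarith
  set s := Real.sqrt (1 - r ^ 2) with hsdef
  have hs : 0 < s := Real.sqrt_pos.mpr hr2
  have hs2 : s ^ 2 = 1 - r ^ 2 := Real.sq_sqrt hr2.le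
  have h1s : (0:ℝ) < 1 + s := by linarith
  set d := Real.sqrt (2 * s * (1 + s)) with hddef
  have hd : 0 < d := Real.sqrt_pos.mpr (by nlinarith)
  have hd2 : d ^ 2 = 2 * s * (1 + s) := Real.sq_sqrt (by nlinarith)
  have hzabs : ‖z‖ = r / (1 + s) := by
    rw [show z = y / (((1 + s : ℝ)) : ℂ) from rfl, norm_div, Complex.norm_real, Real.norm_eq_abs,
      abs_of_pos h1s, ← hr]
  have hz1 : ‖z‖ < 1 := by
    rw [hzabs, div_lt_one h1s]; nlinarith
  have h1z : 1 - ‖z‖ ^ 2 = (d / (1 + s)) ^ 2 := by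
    rw [hzabs]; field_simp; nlinarith
  -- |z - y| = r * s / (1 + s)
  have hzy : ‖z - y‖ = r * s / (1 + s) := by
    have hne : ((1 + s : ℝ) : ℂ) ≠ 0 := by
      exact_mod_cast (ne_of_gt h1s)
    have hne' : (1 + (s : ℂ)) ≠ 0 := by
      intro h
      have h2 := congrArg Complex.re h
      simp at h2
      linarith
    have h1 : z - y = y * ((-s / (1 + s) : ℝ) : ℂ) := by
      show y / (((1 + s : ℝ)) : ℂ) - y = _
      push_cast
      field_simp
      ring
    rw [h1, norm_mul, Complex.norm_real, Real.norm_eq_abs, abs_div, abs_neg, abs_of_pos hs,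
      abs_of_pos h1s, ← hr]
    ring
  -- arguments of arsinh
  have harg0 : ‖(0:ℂ) - z‖ /
      Real.sqrt ((1 - ‖(0:ℂ)‖ ^ 2) * (1 - ‖z‖ ^ 2)) = r / d := by
    rw [zero_sub, norm_neg, norm_zero, h1z, hzabs]
    rw [show (1 - (0:ℝ) ^ 2) * (d / (1 + s)) ^ 2 = (d / (1 + s)) ^ 2 by ring,
      Real.sqrt_sq (by positivity)]
    field_simp
  have hargm : ‖z - y‖ /
      Real.sqrt ((1 - ‖z‖ ^ 2) * (1 - ‖y‖ ^ 2)) = r / d := by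
    rw [hzy, h1z, ← hr, ← hs2,
      show (d / (1 + s)) ^ 2 * s ^ 2 = (d * s / (1 + s)) ^ 2 by ring,
      Real.sqrt_sq (by positivity)]
    field_simp
  refine ⟨hz1, ?_, ?_⟩
  · unfold hypDist
    rw [harg0, hargm]
  · unfold hypDist
    rw [harg0, zero_sub, norm_neg, norm_zero, ← hr,
      show (1 - (0:ℝ) ^ 2) * (1 - r ^ 2) = 1 - r ^ 2 by ring, ← hsdef]
    have key : r / s = Real.sinh (2 * Real.arsinh (r / d)) := by
      rw [Real.sinh_two_mul, Real.sinh_arsinh, Real.cosh_arsinh]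
      have : 1 + (r / d) ^ 2 = ((1 + s) / d) ^ 2 := by
        field_simp; nlinarith
      rw [this, Real.sqrt_sq (by positivity)]
      field_simp
      nlinarith
    rw [key, Real.arsinh_sinh]
    ring
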